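/- If T is a tree on n vertices with at least one non-edge, then the strong chromatic index of the complement of T equals C(n,2) - (n-1), the number of non-edges of T. -/

import Mathlib

open SimpleGraph

/-- The square of a graph: same vertices, adjacency iff distance 1 or 2. -/
def SimpleGraph.square {V : Type*} (G : SimpleGraph V) : SimpleGraph V where
  Adj u v := u ≠ v ∧ (G.Adj u v ∨ ∃ w, G.Adj u w ∧ G.Adj w v)
  symm := ⟨by
    rintro u v ⟨h, h' | ⟨w, hw1, hw2⟩⟩
    · exact ⟨h.symm, Or.inl h'.symm⟩
    · exact ⟨h.symm, Or.inr ⟨w, hw2.symm, hw1.symm⟩⟩⟩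
  loopless := ⟨fun v h => h.1 rfl⟩

/-- `G` has an induced cycle of length `n`. -/
def SimpleGraph.HasInducedCycle {V : Type*} (G : SimpleGraph V) (n : ℕ) : Prop :=
  Nonempty (cycleGraph n ↪g G)

/-- A graph is chordal if it has no induced cycle of length at least 4. -/
def SimpleGraph.Chordal {V : Type*} (G : SimpleGraph V) : Prop :=
  ∀ n, 4 ≤ n → ¬ G.HasInducedCycle n

/-- In a tree, for any four vertices `a b c d` with all cross pairs
distinct and `c ≠ d`, not all four cross pairs can be edges. -/
lemma tree_no_four {V : Type*} {T : SimpleGraph V} (hT : T.IsTree) {a b c d : V}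
    (hab : a ≠ b) (hcd : c ≠ d) (hac : a ≠ c) (had : a ≠ d) (hbc : b ≠ c) (hbd : b ≠ d) :
    ¬ (T.Adj a c ∧ T.Adj a d ∧ T.Adj b c ∧ T.Adj b d) := by
  rintro ⟨h1, h2, h3, h4⟩
  have hp1 : (Walk.cons h1 (Walk.cons h3.symm Walk.nil)).IsPath := by
    simp [Walk.isPath_def, hac, hbc.symm, hab]
  have hp2 : (Walk.cons h2 (Walk.cons h4.symm Walk.nil)).IsPath := by
    simp [Walk.isPath_def, had, hbd.symm, hab]
  obtain ⟨p, -, hu⟩ := hT.existsUnique_path a b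
  have heq := (hu _ hp1).trans (hu _ hp2).symm
  have hsupp := congrArg Walk.support heq
  simp at hsupp
  exact hcd hsupp

/-- For a tree T on n vertices with at least one non-edge, the strong chromatic index
of the complement of T is $\binom{n}{2} - (n-1)$. -/
theorem compl_tree_strong_chromatic_index {V : Type*} [Fintype V]
    (T : SimpleGraph V) (hT : T.IsTree)
    (hne : ∃ a b : V, a ≠ b ∧ ¬ T.Adj a b) :
    ((Tᶜ).lineGraph.square).chromaticNumber
      = (((Fintype.card V).choose 2 - (Fintype.card V - 1) : ℕ) : ℕ∞) := by
  classical
  -- Step 1: the square of the line graph of Tᶜ is the complete graph.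
  have hsq : ((Tᶜ).lineGraph.square) = ⊤ := by
    ext e₁ e₂
    simp only [top_adj]
    constructor
    · rintro ⟨h, -⟩; exact h
    · intro hne12
      refine ⟨hne12, ?_⟩
      obtain ⟨e₁, he₁⟩ := e₁
      obtain ⟨e₂, he₂⟩ := e₂
      induction e₁ using Sym2.ind with | _ a b => ?_
      induction e₂ using Sym2.ind with | _ c d => ?_
      rw [mem_edgeSet] at he₁ he₂
      -- If they share a vertex, they are adjacent in the line graph.
      by_cases hshare : a = c ∨ a = d ∨ b = c ∨ b = d
      · left
        refine ⟨hne12, ?_⟩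
        rcases hshare with h | h | h | h
        · exact ⟨a, by simp [h]⟩
        · exact ⟨a, by simp [h]⟩
        · exact ⟨b, by simp [h]⟩
        · exact ⟨b, by simp [h]⟩
      push_neg at hshare
      obtain ⟨hac, had, hbc, hbd⟩ := hshare
      -- Otherwise there is a cross pair which is a non-edge of T, giving a middle edge.
      have key : ∀ x y : V, (x = a ∨ x = b) → (y = c ∨ y = d) → ¬ T.Adj x y →
          ∃ w, (Tᶜ).lineGraph.Adj ⟨s(a,b), (mem_edgeSet _).mpr he₁⟩ w ∧
               (Tᶜ).lineGraph.Adj w ⟨s(c,d), (mem_edgeSet _).mpr he₂⟩ := by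
        intro x y hx hy hxy
        have hxyne : x ≠ y := by
          rcases hx with rfl | rfl <;> rcases hy with rfl | rfl <;> assumption
        have hg : (Tᶜ).Adj x y := ⟨hxyne, hxy⟩
        refine ⟨⟨s(x,y), (mem_edgeSet _).mpr hg⟩, ⟨?_, ⟨x, ?_⟩⟩, ⟨?_, ⟨y, ?_⟩⟩⟩
        · intro h
          have h2 : s(a,b) = s(x,y) := Subtype.ext_iff.mp h
          have h3 : y = a ∨ y = b := by
            have hy2 : y ∈ s(a,b) := by rw [h2]; simp
            simpa using hy2
          rcases hy with rfl | rfl <;> rcases h3 with h | h <;>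
            first | exact hac h.symm | exact hbc h.symm | exact had h.symm | exact hbd h.symm
        · constructor
          · rcases hx with rfl | rfl <;> simp
          · simp
        · intro h
          have h2 : s(x,y) = s(c,d) := Subtype.ext_iff.mp h
          have h3 : x = c ∨ x = d := by
            have hx2 : x ∈ s(c,d) := by rw [← h2]; simp
            simpa using hx2
          rcases hx with rfl | rfl <;> rcases h3 with h | h <;>
            first | exact hac h | exact hbc h | exact had h | exact hbd h
        · constructor
          · simp
          · rcases hy with rfl | rfl <;> simp
      have hnotall := tree_no_four hT he₁.ne he₂.ne hac had hbc hbd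
      by_cases h1 : T.Adj a c
      · by_cases h2 : T.Adj a d
        · by_cases h3 : T.Adj b c
          · by_cases h4 : T.Adj b d
            · exact absurd ⟨h1, h2, h3, h4⟩ hnotall
            · exact Or.inr (key b d (Or.inr rfl) (Or.inr rfl) h4)
          · exact Or.inr (key b c (Or.inr rfl) (Or.inl rfl) h3)
        · exact Or.inr (key a d (Or.inl rfl) (Or.inr rfl) h2)
      · exact Or.inr (key a c (Or.inl rfl) (Or.inl rfl) h1)
  rw [hsq]
  haveI : Fintype ((Tᶜ).edgeSet) := Fintype.ofFinite _
  haveI : Fintype (T.edgeSet) := Fintype.ofFinite _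
  rw [chromaticNumber_top]
  congr 1
  -- Step 2: count the edges of Tᶜ.
  have hT_card : T.edgeFinset.card + 1 = Fintype.card V := hT.card_edgeFinset
  have hdisj : Disjoint T.edgeFinset (Tᶜ).edgeFinset := by
    rw [Finset.disjoint_left]
    intro e heT heTc
    rw [mem_edgeFinset] at heT heTc
    induction e using Sym2.ind with | _ x y => ?_
    rw [mem_edgeSet] at heT heTc
    exact heTc.2 heT
  have hunion : T.edgeFinset ∪ (Tᶜ).edgeFinset = (⊤ : SimpleGraph V).edgeFinset := by
    ext e
    induction e using Sym2.ind with | _ x y => ?_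
    simp only [Finset.mem_union, mem_edgeFinset, mem_edgeSet, compl_adj, top_adj]
    constructor
    · rintro (h | h)
      · exact h.ne
      · exact h.1
    · intro h
      by_cases hT2 : T.Adj x y
      · exact Or.inl hT2
      · exact Or.inr ⟨h, hT2⟩
  have hcount : T.edgeFinset.card + (Tᶜ).edgeFinset.card = (Fintype.card V).choose 2 := by
    rw [← Finset.card_union_of_disjoint hdisj, hunion,
      card_edgeFinset_top_eq_card_choose_two]
  have h6 : Fintype.card ((Tᶜ).edgeSet) = (Tᶜ).edgeFinset.card := (edgeFinset_card).symm
  rw [h6]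
  omega
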